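/- Suppose log Ψ(t) = β₁ min(log t - log τ, 0) + β₂(log τ + max(log t - log τ, 0)) holds for all t in an open subinterval of (0,1) containing points on both sides of τ, and also equals β₁' min(log t - log τ', 0) + β₂'(log τ' + max(log t - log τ', 0)) for all such t with change point τ' in the same interval. If β₁ ≠ β₂ and β₁' ≠ β₂', then (β₁,β₂,τ) = (β₁',β₂',τ'): the parameters of the segmented model are identifiable when a genuine change point exists. -/
import Mathlib


/-- Identifiability of the segmented correspondence curve regression: two segmented
log-linear models with genuine slope changes agreeing on an open interval containing
both change points have identical parameters. -/
theorem stmt13 (β₁ β₂ β₁' β₂' τ τ' c d : ℝ)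
    (hsub : Set.Ioo c d ⊆ Set.Ioo (0:ℝ) 1)
    (hτ : τ ∈ Set.Ioo c d) (hτ' : τ' ∈ Set.Ioo c d)
    (hβ : β₁ ≠ β₂) (hβ' : β₁' ≠ β₂')
    (hagree : ∀ t ∈ Set.Ioo c d,
      β₁ * min (Real.log t - Real.log τ) 0
          + β₂ * (Real.log τ + max (Real.log t - Real.log τ) 0)
        = β₁' * min (Real.log t - Real.log τ') 0
          + β₂' * (Real.log τ' + max (Real.log t - Real.log τ') 0)) :
    β₁ = β₁' ∧ β₂ = β₂' ∧ τ = τ' := by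
  obtain ⟨hcτ, hτd⟩ := hτ
  obtain ⟨hcτ', hτ'd⟩ := hτ'
  have hτ0 : 0 < τ := (hsub ⟨hcτ, hτd⟩).1
  have hτ'0 : 0 < τ' := (hsub ⟨hcτ', hτ'd⟩).1
  set L := Real.log τ with hL
  set L' := Real.log τ' with hL'
  set m := min τ τ' with hmdef
  set M := max τ τ' with hMdef
  have hm0 : 0 < m := lt_min hτ0 hτ'0
  have hcm : c < m := lt_min hcτ hcτ'
  have hMd : M < d := max_lt hτd hτ'd
  set a := max c 0 with hadef
  have ha0 : 0 ≤ a := le_max_right _ _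
  have hca : c ≤ a := le_max_left _ _
  have ham : a < m := max_lt hcm hm0
  set t₁ := (a + m) / 2 with ht1
  set t₀ := (a + t₁) / 2 with ht0
  set t₂ := (M + d) / 2 with ht2
  set t₃ := (t₂ + d) / 2 with ht3
  have ht₁m : t₁ < m := by simp only [ht1]; linarith
  have hat₁ : a < t₁ := by simp only [ht1]; linarith
  have ht₀₁ : t₀ < t₁ := by simp only [ht0]; linarith
  have hat₀ : a < t₀ := by simp only [ht0]; linarith
  have ht₀0 : 0 < t₀ := lt_of_le_of_lt ha0 hat₀
  have ht₁0 : 0 < t₁ := lt_of_le_of_lt ha0 hat₁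
  have hmτ : m ≤ τ := min_le_left _ _
  have hmτ' : m ≤ τ' := min_le_right _ _
  have hτM : τ ≤ M := le_max_left _ _
  have hτ'M : τ' ≤ M := le_max_right _ _
  have hMt₂ : M < t₂ := by simp only [ht2]; linarith
  have ht₂₃ : t₂ < t₃ := by simp only [ht3, ht2]; linarith
  have ht₃d : t₃ < d := by simp only [ht3, ht2]; linarith
  have hM0 : 0 < M := lt_of_lt_of_le hτ0 hτM
  have ht₂0 : 0 < t₂ := lt_trans hM0 hMt₂
  have ht₃0 : 0 < t₃ := lt_trans ht₂0 ht₂₃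
  have hcM : c < M := lt_of_lt_of_le hcτ hτM
  have ht₀mem : t₀ ∈ Set.Ioo c d := ⟨lt_of_le_of_lt hca hat₀, by linarith⟩
  have ht₁mem : t₁ ∈ Set.Ioo c d := ⟨lt_of_le_of_lt hca hat₁, by linarith⟩
  have ht₂mem : t₂ ∈ Set.Ioo c d := ⟨by linarith, by linarith⟩
  have ht₃mem : t₃ ∈ Set.Ioo c d := ⟨by linarith, by linarith⟩
  set x₀ := Real.log t₀ with hx0
  set x₁ := Real.log t₁ with hx1
  set x₂ := Real.log t₂ with hx2
  set x₃ := Real.log t₃ with hx3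
  have hx₀L : x₀ < L := Real.log_lt_log ht₀0 (lt_of_lt_of_le (lt_trans ht₀₁ ht₁m) hmτ)
  have hx₀L' : x₀ < L' := Real.log_lt_log ht₀0 (lt_of_lt_of_le (lt_trans ht₀₁ ht₁m) hmτ')
  have hx₁L : x₁ < L := Real.log_lt_log ht₁0 (lt_of_lt_of_le ht₁m hmτ)
  have hx₁L' : x₁ < L' := Real.log_lt_log ht₁0 (lt_of_lt_of_le ht₁m hmτ')
  have hx₂L : L < x₂ := Real.log_lt_log hτ0 (lt_of_le_of_lt hτM hMt₂)
  have hx₂L' : L' < x₂ := Real.log_lt_log hτ'0 (lt_of_le_of_lt hτ'M hMt₂)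
  have hx₃L : L < x₃ := Real.log_lt_log hτ0 (lt_of_le_of_lt hτM (lt_trans hMt₂ ht₂₃))
  have hx₃L' : L' < x₃ := Real.log_lt_log hτ'0 (lt_of_le_of_lt hτ'M (lt_trans hMt₂ ht₂₃))
  have hx₀₁ : x₀ < x₁ := Real.log_lt_log ht₀0 ht₀₁
  have hx₂₃ : x₂ < x₃ := Real.log_lt_log ht₂0 ht₂₃
  have E0 := hagree t₀ ht₀mem
  have E1 := hagree t₁ ht₁mem
  have E2 := hagree t₂ ht₂mem
  have E3 := hagree t₃ ht₃mem
  rw [min_eq_left (by linarith), min_eq_left (by linarith),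
      max_eq_right (by linarith), max_eq_right (by linarith)] at E0
  rw [min_eq_left (by linarith), min_eq_left (by linarith),
      max_eq_right (by linarith), max_eq_right (by linarith)] at E1
  rw [min_eq_right (by linarith), min_eq_right (by linarith),
      max_eq_left (by linarith), max_eq_left (by linarith)] at E2
  rw [min_eq_right (by linarith), min_eq_right (by linarith),
      max_eq_left (by linarith), max_eq_left (by linarith)] at E3
  -- E2, E3 give β₂ * x = β₂' * x for x = x₂, x₃
  have hb2 : β₂ = β₂' := by
    rw [← hx2] at E2
    rw [← hx3] at E3
    have h : β₂ * (x₂ - x₃) = β₂' * (x₂ - x₃) := by linear_combination E2 - E3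
    exact mul_right_cancel₀ (by linarith : x₂ - x₃ ≠ 0) h
  have hb1 : β₁ = β₁' := by
    rw [← hx0] at E0
    rw [← hx1] at E1
    have h : β₁ * (x₀ - x₁) = β₁' * (x₀ - x₁) := by linear_combination E0 - E1
    exact mul_right_cancel₀ (by linarith : x₀ - x₁ ≠ 0) h
  have hLL : L = L' := by
    have h : (β₂ - β₁) * L = (β₂ - β₁) * L' := by
      have E1' := hagree t₁ ht₁mem
      rw [min_eq_left (by linarith), min_eq_left (by linarith),
          max_eq_right (by linarith), max_eq_right (by linarith), ← hx1] at E1'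
      linear_combination E1' - (x₁ - L') * hb1 - L' * hb2
    have hne : β₂ - β₁ ≠ 0 := sub_ne_zero.mpr (Ne.symm hβ)
    exact mul_left_cancel₀ hne h
  have hττ' : τ = τ' := by
    have := congrArg Real.exp hLL
    rwa [hL, hL', Real.exp_log hτ0, Real.exp_log hτ'0] at this
  exact ⟨hb1, hb2, hττ'⟩
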